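/- arXiv:1102.4478 — 3 statements merged into one kernel-verified Lean document; each statement's English description precedes it below -/
import Mathlib

section
/- Let γ : ℝ → ℝ² be a C^∞ regular curve with a generic inflection point at t = 0, with [γ'(t), γ''(t)] ≠ 0 for t ≠ 0 near 0, and let τ(t) := sgn(t)·|s_A(t)|^{3/4}. Then lim_{t→0} (s_A(t)²·κ_A(t) + 5/16)/τ(t) = −(3·3^{1/4}/(28√2))·μ_I, where μ_I is the affine inflectional curvature of γ at t = 0. -/
noncomputable section
open Real Set Filter Topology

/-- The determinant `[a, b] = a₁b₂ − a₂b₁` of two vectors in the plane. -/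
def det2 (a b : ℝ × ℝ) : ℝ := a.1 * b.2 - a.2 * b.1

/-- The Euclidean norm on `ℝ × ℝ`. -/
def enorm2 (a : ℝ × ℝ) : ℝ := Real.sqrt (a.1 ^ 2 + a.2 ^ 2)

/-- The Euclidean arclength parameter of `γ` based at `0`. -/
def sG (γ : ℝ → ℝ × ℝ) (t : ℝ) : ℝ := ∫ u in (0:ℝ)..t, enorm2 (deriv γ u)

/-- The affine arclength parameter of `γ` based at `0`. -/
def sA (γ : ℝ → ℝ × ℝ) (t : ℝ) : ℝ :=
  ∫ u in (0:ℝ)..t, |det2 (deriv γ u) (iteratedDeriv 2 γ u)| ^ ((1:ℝ)/3)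

/-- The Euclidean curvature `κ_g = [γ', γ'']/‖γ'‖³`. -/
def kappaG (γ : ℝ → ℝ × ℝ) (t : ℝ) : ℝ :=
  det2 (deriv γ t) (iteratedDeriv 2 γ t) / enorm2 (deriv γ t) ^ 3

/-- The affine curvature `κ_A`. -/
def kappaA (γ : ℝ → ℝ × ℝ) (t : ℝ) : ℝ :=
  (3 * det2 (deriv γ t) (iteratedDeriv 2 γ t) * det2 (deriv γ t) (iteratedDeriv 4 γ t)
    + 12 * det2 (deriv γ t) (iteratedDeriv 2 γ t)
        * det2 (iteratedDeriv 2 γ t) (iteratedDeriv 3 γ t)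
    - 5 * det2 (deriv γ t) (iteratedDeriv 3 γ t) ^ 2)
  / (9 * |det2 (deriv γ t) (iteratedDeriv 2 γ t)| ^ ((8:ℝ)/3))

/-- `γ` has a 3/2-cusp at `t = 0`. -/
def HasCusp (γ : ℝ → ℝ × ℝ) : Prop :=
  deriv γ 0 = 0 ∧ det2 (iteratedDeriv 2 γ 0) (iteratedDeriv 3 γ 0) ≠ 0

/-- The Euclidean cuspidal curvature at a 3/2-cusp `t = 0`. -/
def muG (γ : ℝ → ℝ × ℝ) : ℝ :=
  det2 (iteratedDeriv 2 γ 0) (iteratedDeriv 3 γ 0) / enorm2 (iteratedDeriv 2 γ 0) ^ ((5:ℝ)/2)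

/-- The affine cuspidal curvature at a 3/2-cusp `t = 0`. -/
def muA (γ : ℝ → ℝ × ℝ) : ℝ :=
  (24 * det2 (iteratedDeriv 2 γ 0) (iteratedDeriv 3 γ 0)
      * det2 (iteratedDeriv 2 γ 0) (iteratedDeriv 5 γ 0)
   + 60 * det2 (iteratedDeriv 2 γ 0) (iteratedDeriv 3 γ 0)
      * det2 (iteratedDeriv 3 γ 0) (iteratedDeriv 4 γ 0)
   - 35 * det2 (iteratedDeriv 2 γ 0) (iteratedDeriv 4 γ 0) ^ 2)
  / |det2 (iteratedDeriv 2 γ 0) (iteratedDeriv 3 γ 0)| ^ ((12:ℝ)/5)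

/-- `γ` (regular at `0`) has a generic inflection point at `t = 0`. -/
def HasGenericInflection (γ : ℝ → ℝ × ℝ) : Prop :=
  deriv γ 0 ≠ 0 ∧ det2 (deriv γ 0) (iteratedDeriv 2 γ 0) = 0 ∧
    det2 (deriv γ 0) (iteratedDeriv 3 γ 0) ≠ 0

/-- The affine inflectional curvature at a generic inflection point `t = 0`. -/
def muI (γ : ℝ → ℝ × ℝ) : ℝ :=
  Real.sign (det2 (deriv γ 0) (iteratedDeriv 3 γ 0)) *
    (det2 (deriv γ 0) (iteratedDeriv 4 γ 0)
      - 6 * det2 (iteratedDeriv 2 γ 0) (iteratedDeriv 3 γ 0))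
  / |det2 (deriv γ 0) (iteratedDeriv 3 γ 0)| ^ ((5:ℝ)/4)

/-- The affine map `x ↦ Ax + v` on the plane, with `A = (a b; c d)`. -/
def applyAff (a b c d : ℝ) (v : ℝ × ℝ) (p : ℝ × ℝ) : ℝ × ℝ :=
  (a * p.1 + b * p.2 + v.1, c * p.1 + d * p.2 + v.2)


lemma continuous_abs_rpow {r : ℝ} (hr : 0 ≤ r) : Continuous (fun u : ℝ => |u| ^ r) := by
  rw [continuous_iff_continuousAt]
  intro x
  exact (Real.continuousAt_rpow_const _ _ (Or.inr hr)).comp continuous_abs.continuousAt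

lemma hasDerivAt_mul_abs_rpow {r : ℝ} (hr : 0 < r) (t : ℝ) :
    HasDerivAt (fun u : ℝ => u * |u| ^ r) ((r+1) * |t| ^ r) t := by
  rcases lt_trichotomy t 0 with ht | rfl | ht
  · have h1 : HasDerivAt (fun u : ℝ => (-u) ^ r) (r * (-t) ^ (r-1) * (-1)) t :=
      (Real.hasDerivAt_rpow_const (p := r) (Or.inl (by linarith))).comp t (hasDerivAt_neg t)
    have h2 := (hasDerivAt_id t).mul h1
    have heq : (fun u : ℝ => u * |u| ^ r) =ᶠ[𝓝 t] fun u => u * (-u) ^ r := by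
      filter_upwards [eventually_lt_nhds ht] with u hu
      rw [abs_of_neg hu]
    refine (HasDerivAt.congr_of_eventuallyEq ?_ heq)
    convert h2 using 1 <;> try rfl
    have hmt : (-t) ≠ 0 := by intro h; nlinarith [neg_eq_zero.mp h]
    have hpow : (-t) ^ r = (-t) ^ (r-1) * (-t) := by
      rw [← Real.rpow_add_one hmt]; ring_nf
    rw [abs_of_neg ht, hpow]; simp only [id]; ring
  · rw [hasDerivAt_iff_tendsto_slope]
    have : ∀ u : ℝ, u ≠ 0 → slope (fun u : ℝ => u * |u| ^ r) 0 u = |u| ^ r := by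
      intro u hu
      rw [slope_def_field]; field_simp; simp [Real.zero_rpow hr.ne']; ring
    rw [abs_zero, Real.zero_rpow (ne_of_gt hr), mul_zero]
    refine Tendsto.congr' ?_ (f₁ := fun u : ℝ => |u| ^ r) ?_
    · filter_upwards [self_mem_nhdsWithin] with u hu using (this u hu).symm
    · have := ((continuous_abs_rpow hr.le).tendsto 0).mono_left
        (nhdsWithin_le_nhds (s := {(0:ℝ)}ᶜ))
      simpa [Real.zero_rpow (ne_of_gt hr)] using this
  · have h1 : HasDerivAt (fun u : ℝ => u ^ r) (r * t ^ (r-1)) t :=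
      Real.hasDerivAt_rpow_const (p := r) (Or.inl (ne_of_gt ht))
    have h2 := (hasDerivAt_id t).mul h1
    have heq : (fun u : ℝ => u * |u| ^ r) =ᶠ[𝓝 t] fun u => u * u ^ r := by
      filter_upwards [eventually_gt_nhds ht] with u hu
      rw [abs_of_pos hu]
    refine (HasDerivAt.congr_of_eventuallyEq ?_ heq)
    convert h2 using 1 <;> try rfl
    have hpow : t ^ r = t ^ (r-1) * t := by
      rw [← Real.rpow_add_one (ne_of_gt ht)]; ring_nf
    rw [abs_of_pos ht, hpow]; simp only [id]; ring

lemma hasDerivAt_sq_mul_abs_rpow {r : ℝ} (hr : 0 < r) (t : ℝ) :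
    HasDerivAt (fun u : ℝ => u^2 * |u| ^ r) ((r+2) * (t * |t| ^ r)) t := by
  have h := (hasDerivAt_id t).mul (hasDerivAt_mul_abs_rpow hr t)
  have h2 : (fun u : ℝ => u^2 * |u| ^ r) = fun u => u * (u * |u| ^ r) := by
    funext u; ring
  rw [h2]
  convert h using 1 <;> try rfl
  simp only [id]; ring

lemma integral_abs_rpow {r : ℝ} (hr : 0 < r) (t : ℝ) :
    ∫ u in (0:ℝ)..t, |u| ^ r = (t * |t| ^ r) / (r+1) := by
  have key := intervalIntegral.integral_eq_sub_of_hasDerivAt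
      (f := fun u : ℝ => (u * |u| ^ r)/(r+1)) (f' := fun u : ℝ => |u| ^ r)
      (a := 0) (b := t) ?_ ?_
  · rw [key]; simp
  · intro x _
    have := (hasDerivAt_mul_abs_rpow hr x).div_const (r+1)
    convert this using 1 <;> try rfl
    field_simp
  · exact (continuous_abs_rpow hr.le).intervalIntegrable _ _

lemma integral_mul_abs_rpow {r : ℝ} (hr : 0 < r) (t : ℝ) :
    ∫ u in (0:ℝ)..t, u * |u| ^ r = (t^2 * |t| ^ r) / (r+2) := by
  have key := intervalIntegral.integral_eq_sub_of_hasDerivAt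
      (f := fun u : ℝ => (u^2 * |u| ^ r)/(r+2)) (f' := fun u : ℝ => u * |u| ^ r)
      (a := 0) (b := t) ?_ ?_
  · rw [key]; simp
  · intro x _
    have := (hasDerivAt_sq_mul_abs_rpow hr x).div_const (r+2)
    convert this using 1 <;> try rfl
    field_simp
  · exact ((continuous_id.mul (continuous_abs_rpow hr.le))).intervalIntegrable _ _

lemma abs_rpow_add_one {r : ℝ} (hr : 0 < r) (t : ℝ) : |t| * |t| ^ r = |t| ^ (r + 1) := by
  rcases eq_or_ne t 0 with rfl | ht
  · simp [Real.zero_rpow (show r + 1 ≠ 0 by linarith)]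
  · rw [Real.rpow_add_one (by simpa using ht), mul_comm]

/-- integrating a little-o of `u * |u|^(1/3)` -/
lemma integral_isLittleO {g : ℝ → ℝ} (hgc : Continuous g)
    (hg : g =o[𝓝 0] (fun u : ℝ => u * |u| ^ ((1:ℝ)/3))) :
    (fun t : ℝ => ∫ u in (0:ℝ)..t, g u) =o[𝓝 0] (fun t : ℝ => t^2 * |t| ^ ((1:ℝ)/3)) := by
  rw [Asymptotics.isLittleO_iff] at hg ⊢
  intro ε hε
  obtain ⟨δ, hδ, hball⟩ := Metric.eventually_nhds_iff.mp (hg hε)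
  rw [Metric.eventually_nhds_iff]
  refine ⟨δ, hδ, fun t ht => ?_⟩
  have hbound : ∀ᵐ u ∂(MeasureTheory.volume.restrict (Set.uIoc (0:ℝ) t)), ‖g u‖ ≤ ε * |u| ^ ((4:ℝ)/3) := by
    refine (MeasureTheory.ae_restrict_mem measurableSet_uIoc).mono (fun u hu => ?_)
    have hu2 : dist u 0 < δ := by
      rw [Real.dist_eq, sub_zero]
      rw [Real.dist_eq, sub_zero] at ht
      rcases le_total 0 t with h | h
      · rw [uIoc_of_le h] at hu
        calc |u| ≤ |t| := by rw [abs_of_pos hu.1, abs_of_nonneg h]; exact hu.2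
        _ < δ := ht
      · rw [uIoc_of_ge h] at hu
        calc |u| ≤ |t| := by
              rw [abs_of_nonpos hu.2, abs_of_nonpos h]; linarith [hu.1]
        _ < δ := ht
    have := hball hu2
    calc ‖g u‖ ≤ ε * ‖u * |u| ^ ((1:ℝ)/3)‖ := this
      _ = ε * |u| ^ ((4:ℝ)/3) := by
          rw [Real.norm_eq_abs, abs_mul, abs_of_nonneg (Real.rpow_nonneg (abs_nonneg u) _),
            abs_rpow_add_one (by norm_num : (0:ℝ) < 1/3)]
          norm_num
  have hle := intervalIntegral.norm_integral_le_abs_of_norm_le (μ := MeasureTheory.volume)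
      (f := g) (a := 0) (b := t) hbound
      (((continuous_const.mul (continuous_abs_rpow (by norm_num)))).intervalIntegrable _ _)
  calc ‖∫ u in (0:ℝ)..t, g u‖ ≤ |∫ u in (0:ℝ)..t, ε * |u| ^ ((4:ℝ)/3)| := hle
    _ ≤ ε * ‖t^2 * |t| ^ ((1:ℝ)/3)‖ := by
        have h2 : (0:ℝ) ≤ |t| ^ ((1:ℝ)/3) := Real.rpow_nonneg (abs_nonneg t) _
        have h1 : |t| ^ ((4:ℝ)/3) = |t| * |t| ^ ((1:ℝ)/3) := by
          rw [abs_rpow_add_one (by norm_num : (0:ℝ) < 1/3)]; norm_num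
        have e1 : |t * |t| ^ ((4:ℝ)/3)| = |t| * |t| ^ ((4:ℝ)/3) := by
          rw [abs_mul, abs_of_nonneg (Real.rpow_nonneg (abs_nonneg t) _)]
        have e2 : |t^2 * |t| ^ ((1:ℝ)/3)| = |t| * |t| * |t| ^ ((1:ℝ)/3) := by
          rw [abs_mul, abs_of_nonneg h2, ← pow_abs, sq]
        rw [intervalIntegral.integral_const_mul, integral_abs_rpow (by norm_num : (0:ℝ) < 4/3)]
        rw [Real.norm_eq_abs, abs_mul, abs_of_pos hε, abs_div, e1, h1,
          abs_of_pos (show (0:ℝ) < 4/3 + 1 by norm_num), e2]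
        have h3 : (0:ℝ) ≤ |t| * |t| * |t| ^ ((1:ℝ)/3) := by positivity
        have h4 : |t| * (|t| * |t| ^ ((1:ℝ)/3)) / (4/3+1) ≤ |t| * |t| * |t| ^ ((1:ℝ)/3) := by
          rw [div_le_iff₀ (by norm_num : (0:ℝ) < 4/3+1)]; nlinarith [h3]
        exact mul_le_mul_of_nonneg_left h4 hε.le

lemma hasDerivAt_S {q : ℝ → ℝ} (hqc : Continuous q) {b : ℝ} (hq : HasDerivAt q b 0) :
    HasDerivAt (fun t : ℝ => if t = (0:ℝ) then 3/4 * q 0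
        else (∫ u in (0:ℝ)..t, q u * |u| ^ ((1:ℝ)/3)) / (t * |t| ^ ((1:ℝ)/3)))
      (3/7*b) 0 := by
  have hthird : (0:ℝ) < 1/3 := by norm_num
  set g : ℝ → ℝ := fun u => (q u - q 0 - b*u) * |u| ^ ((1:ℝ)/3) with hg_def
  have hgc : Continuous g :=
    ((hqc.sub continuous_const).sub (continuous_const.mul continuous_id)).mul
      (continuous_abs_rpow hthird.le)
  have hgo : g =o[𝓝 0] (fun u : ℝ => u * |u| ^ ((1:ℝ)/3)) := by
    have ho := (hasDerivAt_iff_isLittleO.mp hq)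
    have ho2 : (fun u : ℝ => q u - q 0 - b*u) =o[𝓝 0] (fun u : ℝ => u) := by
      simpa [mul_comm] using ho
    have := ho2.mul_isBigO (Asymptotics.isBigO_refl (fun u : ℝ => |u| ^ ((1:ℝ)/3)) (𝓝 0))
    exact this
  have hO := integral_isLittleO hgc hgo
  have hiq : Continuous (fun u : ℝ => q u * |u| ^ ((1:ℝ)/3)) :=
    hqc.mul (continuous_abs_rpow hthird.le)
  have hint : ∀ t : ℝ, (∫ u in (0:ℝ)..t, g u)
      = (∫ u in (0:ℝ)..t, q u * |u| ^ ((1:ℝ)/3))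
        - q 0 * ((t * |t| ^ ((1:ℝ)/3))/(1/3+1)) - b * ((t^2 * |t| ^ ((1:ℝ)/3))/(1/3+2)) := by
    intro t
    have e1 : (∫ u in (0:ℝ)..t, g u)
        = (∫ u in (0:ℝ)..t, q u * |u| ^ ((1:ℝ)/3))
          - (∫ u in (0:ℝ)..t, q 0 * |u| ^ ((1:ℝ)/3))
          - (∫ u in (0:ℝ)..t, b * (u * |u| ^ ((1:ℝ)/3))) := by
      rw [← intervalIntegral.integral_sub, ← intervalIntegral.integral_sub]
      · congr 1; funext u; simp only [hg_def]; ring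
      · exact (hiq.sub (continuous_const.mul (continuous_abs_rpow hthird.le))).intervalIntegrable _ _
      · exact (continuous_const.mul (continuous_id.mul (continuous_abs_rpow hthird.le))).intervalIntegrable _ _
      · exact hiq.intervalIntegrable _ _
      · exact (continuous_const.mul (continuous_abs_rpow hthird.le)).intervalIntegrable _ _
    rw [e1, intervalIntegral.integral_const_mul, intervalIntegral.integral_const_mul,
      integral_abs_rpow hthird, integral_mul_abs_rpow hthird]
  rw [hasDerivAt_iff_isLittleO]
  rw [Asymptotics.isLittleO_iff] at hO ⊢
  intro ε hε
  filter_upwards [hO hε] with t hOt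
  rcases eq_or_ne t 0 with rfl | ht
  · simp
  · have hw : (0:ℝ) < |t| ^ ((1:ℝ)/3) := Real.rpow_pos_of_pos (abs_pos.mpr ht) _
    have htw : t * |t| ^ ((1:ℝ)/3) ≠ 0 := mul_ne_zero ht (ne_of_gt hw)
    have hS : (if t = (0:ℝ) then 3/4 * q 0
        else (∫ u in (0:ℝ)..t, q u * |u| ^ ((1:ℝ)/3)) / (t * |t| ^ ((1:ℝ)/3)))
        - (if (0:ℝ) = (0:ℝ) then 3/4 * q 0
        else (∫ u in (0:ℝ)..(0:ℝ), q u * |u| ^ ((1:ℝ)/3)) / (0 * |(0:ℝ)| ^ ((1:ℝ)/3)))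
        - (t - 0) * (3/7*b) = (∫ u in (0:ℝ)..t, g u) / (t * |t| ^ ((1:ℝ)/3)) := by
      rw [if_neg ht, if_pos rfl, hint t]
      field_simp
      ring
    rw [smul_eq_mul, hS]
    rw [Real.norm_eq_abs, abs_div, abs_mul,
      abs_of_nonneg (Real.rpow_nonneg (abs_nonneg t) _)]
    rw [div_le_iff₀ (by positivity : (0:ℝ) < |t| * |t| ^ ((1:ℝ)/3))]
    have hrhs : ‖t^2 * |t| ^ ((1:ℝ)/3)‖ = |t| * |t| * |t| ^ ((1:ℝ)/3) := by
      rw [Real.norm_eq_abs, abs_mul, abs_of_nonneg (Real.rpow_nonneg (abs_nonneg t) _),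
        ← pow_abs, sq]
    rw [Real.norm_eq_abs] at hOt
    calc |∫ u in (0:ℝ)..t, g u| ≤ ε * ‖t^2 * |t| ^ ((1:ℝ)/3)‖ := hOt
      _ = ε * ‖t - 0‖ * (|t| * |t| ^ ((1:ℝ)/3)) := by
          rw [hrhs, Real.norm_eq_abs]; rw [sub_zero]; ring

lemma hasDerivAt_abs_rpow_third {x : ℝ} (hx : x ≠ 0) :
    HasDerivAt (fun y : ℝ => |y| ^ ((1:ℝ)/3)) (|x| ^ ((1:ℝ)/3) / (3*x)) x := by
  rcases hx.lt_or_gt with h | h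
  · have hmx : (0:ℝ) < -x := by linarith
    have h1 : HasDerivAt (fun y : ℝ => (-y) ^ ((1:ℝ)/3)) ((1/3) * (-x) ^ ((1:ℝ)/3-1) * (-1)) x :=
      (Real.hasDerivAt_rpow_const (p := (1:ℝ)/3) (Or.inl (ne_of_gt hmx))).comp x (hasDerivAt_neg x)
    have heq : (fun y : ℝ => |y| ^ ((1:ℝ)/3)) =ᶠ[𝓝 x] fun y => (-y) ^ ((1:ℝ)/3) := by
      filter_upwards [eventually_lt_nhds h] with y hy
      rw [abs_of_neg hy]
    refine HasDerivAt.congr_of_eventuallyEq ?_ heq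
    convert h1 using 1 <;> try rfl
    rw [abs_of_neg h, Real.rpow_sub hmx, Real.rpow_one]
    field_simp
  · have h1 : HasDerivAt (fun y : ℝ => y ^ ((1:ℝ)/3)) ((1/3) * x ^ ((1:ℝ)/3-1)) x :=
      Real.hasDerivAt_rpow_const (p := (1:ℝ)/3) (Or.inl (ne_of_gt h))
    have heq : (fun y : ℝ => |y| ^ ((1:ℝ)/3)) =ᶠ[𝓝 x] fun y => y ^ ((1:ℝ)/3) := by
      filter_upwards [eventually_gt_nhds h] with y hy
      rw [abs_of_pos hy]
    refine HasDerivAt.congr_of_eventuallyEq ?_ heq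
    convert h1 using 1 <;> try rfl
    rw [abs_of_pos h, Real.rpow_sub h, Real.rpow_one]
    field_simp

lemma hasDerivAt_quotient {D : ℝ → ℝ} {c₁ c₂ : ℝ} (hD : Differentiable ℝ D) (hD0 : D 0 = 0)
    (hD1 : deriv D 0 = c₁) (hD2 : HasDerivAt (deriv D) c₂ 0) :
    HasDerivAt (fun t : ℝ => if t = 0 then c₁ else D t / t) (c₂/2) 0 := by
  set R : ℝ → ℝ := fun t => D t - c₁*t - c₂/2*t^2 with hR_def
  have hRd : ∀ x : ℝ, HasDerivAt R (deriv D x - c₁ - c₂*x) x := by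
    intro x
    have h1 := ((hD x).hasDerivAt.sub ((hasDerivAt_id x).const_mul c₁)).sub
      ((hasDerivAt_pow 2 x).const_mul (c₂/2))
    convert h1 using 1 <;> try rfl
    push_cast
    ring
  have hRo : (fun x : ℝ => deriv D x - c₁ - c₂*x) =o[𝓝 0] (fun x : ℝ => x) := by
    have := hasDerivAt_iff_isLittleO.mp hD2
    simp only [sub_zero, hD1, smul_eq_mul] at this
    refine this.congr' ?_ (by rfl)
    filter_upwards with x
    ring_nf
  have hRlo : R =o[𝓝 0] (fun t : ℝ => t^2) := by
    rw [Asymptotics.isLittleO_iff] at hRo ⊢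
    intro ε hε
    obtain ⟨δ, hδ, hball⟩ := Metric.eventually_nhds_iff.mp (hRo hε)
    rw [Metric.eventually_nhds_iff]
    refine ⟨δ, hδ, fun t ht => ?_⟩
    have habs : ∀ x : ℝ, x ∈ uIcc (0:ℝ) t → |x| ≤ |t| := by
      intro x hx
      rcases le_total (0:ℝ) t with h | h
      · rw [uIcc_of_le h] at hx
        rw [abs_of_nonneg hx.1, abs_of_nonneg h]; exact hx.2
      · rw [uIcc_of_ge h] at hx
        rw [abs_of_nonpos hx.2, abs_of_nonpos h]; linarith [hx.1]
    have key := Convex.norm_image_sub_le_of_norm_hasDerivWithin_le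
      (f := R) (f' := fun x => deriv D x - c₁ - c₂*x) (s := uIcc (0:ℝ) t) (C := ε * |t|)
      (fun x _ => (hRd x).hasDerivWithinAt)
      (fun x hx => by
        have hd : dist x 0 < δ := by
          rw [Real.dist_eq, sub_zero]
          rw [Real.dist_eq, sub_zero] at ht
          exact lt_of_le_of_lt (habs x hx) ht
        calc ‖deriv D x - c₁ - c₂*x‖ ≤ ε * ‖x‖ := hball hd
          _ ≤ ε * |t| := by
              rw [Real.norm_eq_abs]
              exact mul_le_mul_of_nonneg_left (habs x hx) hε.le)
      (convex_uIcc _ _) left_mem_uIcc right_mem_uIcc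
    have hR0 : R 0 = 0 := by simp [hR_def, hD0]
    rw [hR0, sub_zero, sub_zero] at key
    calc ‖R t‖ ≤ ε * |t| * ‖t‖ := key
      _ = ε * ‖t^2‖ := by rw [Real.norm_eq_abs, Real.norm_eq_abs, abs_pow]; ring
  rw [hasDerivAt_iff_isLittleO]
  rw [Asymptotics.isLittleO_iff] at hRlo ⊢
  intro ε hε
  filter_upwards [hRlo hε] with t hRt
  rcases eq_or_ne t 0 with rfl | ht
  · simp
  · have hS : (if t = (0:ℝ) then c₁ else D t / t)
        - (if (0:ℝ) = (0:ℝ) then c₁ else D 0 / 0) - (t - 0) • (c₂/2) = R t / t := by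
      rw [if_neg ht, if_pos rfl, smul_eq_mul, hR_def]
      field_simp
      ring
    rw [hS, Real.norm_eq_abs, abs_div]
    rw [div_le_iff₀ (abs_pos.mpr ht)]
    simp only [Real.norm_eq_abs] at hRt
    calc |R t| ≤ ε * |t^2| := hRt
      _ = ε * ‖t - 0‖ * |t| := by
          rw [Real.norm_eq_abs, sub_zero, ← pow_abs]; ring

lemma det2_self (a : ℝ × ℝ) : det2 a a = 0 := by simp [det2, mul_comm]

lemma real_sign_mul_abs (t : ℝ) : Real.sign t * |t| = t := by
  rcases lt_trichotomy t 0 with h | rfl | h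
  · rw [Real.sign_of_neg h, abs_of_neg h]; ring
  · simp
  · rw [Real.sign_of_pos h, abs_of_pos h]; ring

lemma hasDerivAt_det2 {f g : ℝ → ℝ × ℝ} {f' g' : ℝ × ℝ} {t : ℝ}
    (hf : HasDerivAt f f' t) (hg : HasDerivAt g g' t) :
    HasDerivAt (fun u => det2 (f u) (g u)) (det2 f' (g t) + det2 (f t) g') t := by
  have hf1 : HasDerivAt (fun u => (f u).1) f'.1 t := by
    exact hasFDerivAt_fst.comp_hasDerivAt t hf
  have hf2 : HasDerivAt (fun u => (f u).2) f'.2 t := by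
    exact hasFDerivAt_snd.comp_hasDerivAt t hf
  have hg1 : HasDerivAt (fun u => (g u).1) g'.1 t := by
    exact hasFDerivAt_fst.comp_hasDerivAt t hg
  have hg2 : HasDerivAt (fun u => (g u).2) g'.2 t := by
    exact hasFDerivAt_snd.comp_hasDerivAt t hg
  have h := (hf1.mul hg2).sub (hf2.mul hg1)
  convert h using 1 <;> try rfl
  simp only [det2]
  ring

namespace Stmt15

variable (γ : ℝ → ℝ × ℝ)

/-- `[γ', γ'']`. -/
def Df : ℝ → ℝ := fun t => det2 (deriv γ t) (iteratedDeriv 2 γ t)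
/-- `[γ', γ''']`. -/
def Gf : ℝ → ℝ := fun t => det2 (deriv γ t) (iteratedDeriv 3 γ t)
/-- `[γ', γ⁗]`. -/
def Ef : ℝ → ℝ := fun t => det2 (deriv γ t) (iteratedDeriv 4 γ t)
/-- `[γ'', γ''']`. -/
def Ff : ℝ → ℝ := fun t => det2 (iteratedDeriv 2 γ t) (iteratedDeriv 3 γ t)
/-- numerator of affine curvature -/
def Nf : ℝ → ℝ := fun t => 3 * Df γ t * Ef γ t + 12 * Df γ t * Ff γ t - 5 * Gf γ t ^ 2
/-- `[γ', γ'']/t` -/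
def hf : ℝ → ℝ := fun t => if t = 0 then Gf γ 0 else Df γ t / t
/-- `(|[γ', γ'']|/|t|)^(1/3)` -/
def qf : ℝ → ℝ := fun t => |hf γ t| ^ ((1:ℝ)/3)
/-- `s_A/(t·|t|^{1/3})` -/
def Sf : ℝ → ℝ := fun t => if t = (0:ℝ) then 3/4 * qf γ 0
  else (∫ u in (0:ℝ)..t, qf γ u * |u| ^ ((1:ℝ)/3)) / (t * |t| ^ ((1:ℝ)/3))
/-- `s_A²κ_A + 5/16` as a differentiable-at-`0` function -/
def Phif : ℝ → ℝ := fun t => Sf γ t ^ 2 * Nf γ t / (9 * qf γ t ^ 8) + 5/16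

variable {γ} (hγ : ContDiff ℝ (⊤:ℕ∞) γ)
include hγ

lemma hder (k : ℕ) (t : ℝ) : HasDerivAt (iteratedDeriv k γ) (iteratedDeriv (k+1) γ t) t := by
  have hsm : ContDiff ℝ (⊤:ℕ∞) (iteratedDeriv k γ) := by
    rw [iteratedDeriv_eq_iterate]; exact hγ.iterate_deriv k
  have hd : DifferentiableAt ℝ (iteratedDeriv k γ) t :=
    (hsm.differentiable (by simp)).differentiableAt
  have := hd.hasDerivAt
  rwa [← iteratedDeriv_succ] at this

lemma hder1 (t : ℝ) : HasDerivAt (deriv γ) (iteratedDeriv 2 γ t) t := by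
  have := hder hγ 1 t; rwa [iteratedDeriv_one] at this

lemma hDder (t : ℝ) : HasDerivAt (Df γ) (Gf γ t) t := by
  have h := hasDerivAt_det2 (hder1 hγ t) (hder hγ 2 t)
  unfold Df Gf
  simpa [Df, Gf, det2_self] using h

lemma hGder (t : ℝ) : HasDerivAt (Gf γ) (Ff γ t + Ef γ t) t := by
  have h := hasDerivAt_det2 (hder1 hγ t) (hder hγ 3 t)
  unfold Gf Ff Ef
  simpa [Gf, Ff, Ef, Df, add_comm] using h

lemma hEder (t : ℝ) : HasDerivAt (Ef γ)
    (det2 (iteratedDeriv 2 γ t) (iteratedDeriv 4 γ t) + det2 (deriv γ t) (iteratedDeriv 5 γ t)) t := by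
  have h := hasDerivAt_det2 (hder1 hγ t) (hder hγ 4 t)
  unfold Ef
  simpa [Ef] using h

lemma hFder (t : ℝ) : HasDerivAt (Ff γ) (det2 (iteratedDeriv 2 γ t) (iteratedDeriv 4 γ t)) t := by
  have h := hasDerivAt_det2 (hder hγ 2 t) (hder hγ 3 t)
  unfold Ff
  simpa [Ff, det2_self] using h

lemma hNder (hD0 : Df γ 0 = 0) :
    HasDerivAt (Nf γ) (Gf γ 0 * (2 * Ff γ 0 - 7 * Ef γ 0)) 0 := by
  have h1 := ((hDder hγ 0).mul (hEder hγ 0)).const_mul (3:ℝ)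
  have h2 := ((hDder hγ 0).mul (hFder hγ 0)).const_mul (12:ℝ)
  have h3 := ((hGder hγ 0).pow 2).const_mul (5:ℝ)
  have h := (h1.add h2).sub h3
  have he : Nf γ = fun t => 3 * (Df γ t * Ef γ t) + 12 * (Df γ t * Ff γ t) - 5 * (Gf γ t ^ 2) := by
    funext t; simp only [Nf]; ring
  rw [he]
  convert h using 1 <;> try rfl
  rw [hD0]
  push_cast
  ring

lemma hDcont : Continuous (Df γ) := by
  rw [continuous_iff_continuousAt]; exact fun t => (hDder hγ t).continuousAt

lemma hhder (hD0 : Df γ 0 = 0) : HasDerivAt (hf γ) ((Ff γ 0 + Ef γ 0)/2) 0 := by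
  have hdd : Differentiable ℝ (Df γ) := fun t => (hDder hγ t).differentiableAt
  have h1 : deriv (Df γ) 0 = Gf γ 0 := (hDder hγ 0).deriv
  have h2 : HasDerivAt (deriv (Df γ)) (Ff γ 0 + Ef γ 0) 0 := by
    have he : deriv (Df γ) = Gf γ := funext fun t => (hDder hγ t).deriv
    rw [he]; exact hGder hγ 0
  exact hasDerivAt_quotient hdd hD0 h1 h2

lemma hhcont (hD0 : Df γ 0 = 0) : Continuous (hf γ) := by
  rw [continuous_iff_continuousAt]
  intro x
  rcases eq_or_ne x 0 with rfl | hx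
  · exact (hhder hγ hD0).continuousAt
  · have : (fun t => Df γ t / t) =ᶠ[𝓝 x] hf γ := by
      filter_upwards [eventually_ne_nhds hx] with y hy
      rw [hf, if_neg hy]
    exact ContinuousAt.congr (((hDcont hγ).continuousAt).div continuousAt_id hx) this

lemma hq0' : qf γ 0 = |Gf γ 0| ^ ((1:ℝ)/3) := by
  simp [qf, hf]

lemma ha3 : (qf γ 0)^3 = |Gf γ 0| := by
  rw [hq0' hγ, ← Real.rpow_natCast (|Gf γ 0| ^ ((1:ℝ)/3)) 3, ← Real.rpow_mul (abs_nonneg _)]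
  norm_num

lemma ha6 : (qf γ 0)^6 = (Gf γ 0)^2 := by
  calc (qf γ 0)^6 = ((qf γ 0)^3)^2 := by ring
    _ = |Gf γ 0|^2 := by rw [ha3 hγ]
    _ = (Gf γ 0)^2 := sq_abs _

lemma hqpos0 (hc₁ : Gf γ 0 ≠ 0) : 0 < qf γ 0 := by
  rw [hq0' hγ]
  exact Real.rpow_pos_of_pos (abs_pos.mpr hc₁) _

lemma hqder (hD0 : Df γ 0 = 0) (hc₁ : Gf γ 0 ≠ 0) :
    HasDerivAt (qf γ)
      (|Gf γ 0| ^ ((1:ℝ)/3) / (3 * Gf γ 0) * ((Ff γ 0 + Ef γ 0)/2)) 0 := by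
  have h1 : HasDerivAt (fun y : ℝ => |y| ^ ((1:ℝ)/3))
      (|Gf γ 0| ^ ((1:ℝ)/3) / (3 * Gf γ 0)) (hf γ 0) := by
    have : hf γ 0 = Gf γ 0 := by simp [hf]
    rw [this]
    exact hasDerivAt_abs_rpow_third hc₁
  exact h1.comp 0 (hhder hγ hD0)

lemma hqcont (hD0 : Df γ 0 = 0) : Continuous (qf γ) :=
  (continuous_abs_rpow (by norm_num : (0:ℝ) ≤ 1/3)).comp (hhcont hγ hD0)

lemma hSder (hD0 : Df γ 0 = 0) (hc₁ : Gf γ 0 ≠ 0) :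
    HasDerivAt (Sf γ)
      (3/7 * (|Gf γ 0| ^ ((1:ℝ)/3) / (3 * Gf γ 0) * ((Ff γ 0 + Ef γ 0)/2))) 0 :=
  hasDerivAt_S (hqcont hγ hD0) (hqder hγ hD0 hc₁)

lemma hS0 : Sf γ 0 = 3/4 * qf γ 0 := by simp [Sf]

lemma hN0 (hD0 : Df γ 0 = 0) : Nf γ 0 = -5 * Gf γ 0^2 := by
  show 3 * Df γ 0 * Ef γ 0 + 12 * Df γ 0 * Ff γ 0 - 5 * Gf γ 0 ^ 2 = _
  rw [hD0]; ring

lemma hqid (hD0 : Df γ 0 = 0) (u : ℝ) :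
    |Df γ u| ^ ((1:ℝ)/3) = qf γ u * |u| ^ ((1:ℝ)/3) := by
  rcases eq_or_ne u 0 with rfl | hu
  · rw [hD0]
    simp [Real.zero_rpow (by norm_num : (1:ℝ)/3 ≠ 0)]
  · have hDu : Df γ u = hf γ u * u := by
      rw [hf, if_neg hu]; field_simp
    rw [hDu, abs_mul, Real.mul_rpow (abs_nonneg _) (abs_nonneg _)]
    rfl

lemma hPhi0 (hD0 : Df γ 0 = 0) (hc₁ : Gf γ 0 ≠ 0) : Phif γ 0 = 0 := by
  have h6 := ha6 hγ
  have hq := hqpos0 hγ hc₁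
  show Sf γ 0 ^ 2 * Nf γ 0 / (9 * qf γ 0 ^ 8) + 5/16 = 0
  rw [hS0 hγ, hN0 hγ hD0]
  have hqne : qf γ 0 ≠ 0 := ne_of_gt hq
  field_simp
  linear_combination 720 * h6

lemma hPhider (hD0 : Df γ 0 = 0) (hc₁ : Gf γ 0 ≠ 0) :
    HasDerivAt (Phif γ) (-(9/112) * (Ef γ 0 - 6 * Ff γ 0) / Gf γ 0) 0 := by
  have hS := hSder hγ hD0 hc₁
  have hq := hqder hγ hD0 hc₁
  have hN := hNder hγ hD0
  have hqne : qf γ 0 ≠ 0 := ne_of_gt (hqpos0 hγ hc₁)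
  have hdne : (9:ℝ) * qf γ 0 ^ 8 ≠ 0 := by positivity
  have h := (((hS.pow 2).mul hN).div ((hq.pow 8).const_mul 9) hdne).add_const (5/16)
  convert h using 1 <;> try rfl
  simp only [Pi.pow_apply, Pi.mul_apply]
  rw [hS0 hγ, hN0 hγ hD0, ← hq0' hγ]
  have h6 := ha6 hγ
  field_simp
  ring_nf
  linear_combination (18144 * qf γ 0^7 * (6*Ff γ 0 - Ef γ 0)) * h6

end Stmt15

open Stmt15 in
/-- At a generic inflection point,
`lim_{t→0} ((s_A)²κ_A + 5/16)/τ = −(3·⁴√3/(28√2))·μ_I`,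
where `τ = sgn(t)·|s_A(t)|^{3/4}`. -/
theorem stmt_15 (γ : ℝ → ℝ × ℝ) (hγ : ContDiff ℝ (⊤:ℕ∞) γ)
    (hinf : HasGenericInflection γ)
    (hreg : ∀ᶠ t in 𝓝[≠] (0:ℝ), det2 (deriv γ t) (iteratedDeriv 2 γ t) ≠ 0) :
    Tendsto (fun t => (sA γ t ^ 2 * kappaA γ t + 5/16)
        / (Real.sign t * |sA γ t| ^ ((3:ℝ)/4)))
      (𝓝[≠] (0:ℝ))
      (𝓝 (-(3 * (3:ℝ) ^ ((1:ℝ)/4) / (28 * Real.sqrt 2)) * muI γ)) := by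
  obtain ⟨-, hD0, hc₁⟩ := hinf
  have hD0' : Df γ 0 = 0 := hD0
  have hc₁' : Gf γ 0 ≠ 0 := hc₁
  have hqpos : 0 < qf γ 0 := hqpos0 hγ hc₁'
  have hqne : qf γ 0 ≠ 0 := ne_of_gt hqpos
  have hS0' : Sf γ 0 = 3/4 * qf γ 0 := hS0 hγ
  have hS0pos : 0 < Sf γ 0 := by rw [hS0']; nlinarith [hqpos]
  have T1 : Tendsto (fun t => Phif γ t / t) (𝓝[≠] 0)
      (𝓝 (-(9/112) * (Ef γ 0 - 6 * Ff γ 0) / Gf γ 0)) := by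
    have h := hasDerivAt_iff_tendsto_slope.mp (hPhider hγ hD0' hc₁')
    refine h.congr fun t => ?_
    rw [slope_def_field, hPhi0 hγ hD0' hc₁', sub_zero, sub_zero]
  have T2 : Tendsto (fun t => |Sf γ t| ^ ((3:ℝ)/4)) (𝓝[≠] 0)
      (𝓝 (|Sf γ 0| ^ ((3:ℝ)/4))) := by
    have hc := (hSder hγ hD0' hc₁').continuousAt
    exact ((hc.tendsto.mono_left nhdsWithin_le_nhds).abs).rpow_const (Or.inr (by norm_num))
  have hS034 : |Sf γ 0| ^ ((3:ℝ)/4) ≠ 0 :=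
    ne_of_gt (Real.rpow_pos_of_pos (abs_pos.mpr (ne_of_gt hS0pos)) _)
  have T := T1.div T2 hS034
  have heq : ∀ᶠ t in 𝓝[≠] (0:ℝ),
      (Phif γ t / t) / (|Sf γ t| ^ ((3:ℝ)/4))
      = (sA γ t ^ 2 * kappaA γ t + 5/16) / (Real.sign t * |sA γ t| ^ ((3:ℝ)/4)) := by
    filter_upwards [hreg, self_mem_nhdsWithin] with t hDt ht
    have ht : (t:ℝ) ≠ 0 := ht
    have hw : (0:ℝ) < |t| ^ ((1:ℝ)/3) := Real.rpow_pos_of_pos (abs_pos.mpr ht) _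
    have hDt' : Df γ t ≠ 0 := hDt
    have hht : hf γ t ≠ 0 := by
      rw [hf, if_neg ht]; exact div_ne_zero hDt' ht
    have hqt : 0 < qf γ t := Real.rpow_pos_of_pos (abs_pos.mpr hht) _
    have hsAeq : sA γ t = t * |t| ^ ((1:ℝ)/3) * Sf γ t := by
      have hint : sA γ t = ∫ u in (0:ℝ)..t, qf γ u * |u| ^ ((1:ℝ)/3) := by
        rw [sA]
        exact intervalIntegral.integral_congr fun u _ => hqid hγ hD0' u
      rw [Sf, if_neg ht, hint]
      field_simp
    have hkappa : kappaA γ t = Nf γ t / (9 * |Df γ t| ^ ((8:ℝ)/3)) := rfl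
    have habs83 : |Df γ t| ^ ((8:ℝ)/3) = (qf γ t * |t| ^ ((1:ℝ)/3))^8 := by
      rw [← hqid hγ hD0' t, ← Real.rpow_natCast (|Df γ t| ^ ((1:ℝ)/3)) 8,
        ← Real.rpow_mul (abs_nonneg _)]
      norm_num
    have hw6 : (|t| ^ ((1:ℝ)/3))^6 = t^2 := by
      rw [← Real.rpow_natCast (|t| ^ ((1:ℝ)/3)) 6, ← Real.rpow_mul (abs_nonneg t)]
      norm_num
    have hnum : sA γ t ^ 2 * kappaA γ t + 5/16 = Phif γ t := by
      rw [hsAeq, hkappa, habs83]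
      show _ = Sf γ t ^ 2 * Nf γ t / (9 * qf γ t ^ 8) + 5/16
      field_simp
      linear_combination (-(16:ℝ) * Sf γ t^2 * Nf γ t) * hw6
    have hden : Real.sign t * |sA γ t| ^ ((3:ℝ)/4) = t * |Sf γ t| ^ ((3:ℝ)/4) := by
      rw [hsAeq]
      have h43 : |t| * |t| ^ ((1:ℝ)/3) = |t| ^ ((4:ℝ)/3) := by
        rw [abs_rpow_add_one (by norm_num : (0:ℝ) < 1/3)]; norm_num
      have e1 : |t * |t| ^ ((1:ℝ)/3) * Sf γ t| = |t| ^ ((4:ℝ)/3) * |Sf γ t| := by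
        rw [abs_mul, abs_mul, abs_of_nonneg hw.le, h43]
      rw [e1, Real.mul_rpow (Real.rpow_nonneg (abs_nonneg t) _) (abs_nonneg _),
        ← Real.rpow_mul (abs_nonneg t)]
      norm_num
      rw [← mul_assoc, real_sign_mul_abs]
    rw [hnum, hden, ← div_div]
  have hval : -(9/112) * (Ef γ 0 - 6 * Ff γ 0) / Gf γ 0 / (|Sf γ 0| ^ ((3:ℝ)/4))
      = -(3 * (3:ℝ) ^ ((1:ℝ)/4) / (28 * Real.sqrt 2)) * muI γ := by
    have hmuI : muI γ = Real.sign (Gf γ 0) * (Ef γ 0 - 6 * Ff γ 0) / |Gf γ 0| ^ ((5:ℝ)/4) := rfl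
    set s : ℝ := Real.sign (Gf γ 0) with hs_def
    set A : ℝ := |Gf γ 0| ^ ((1:ℝ)/4) with hA_def
    set B : ℝ := (3:ℝ) ^ ((1:ℝ)/4) with hB_def
    have hApos : 0 < A := Real.rpow_pos_of_pos (abs_pos.mpr hc₁') _
    have hBpos : 0 < B := Real.rpow_pos_of_pos (by norm_num) _
    have hsq2 : (0:ℝ) < Real.sqrt 2 := Real.sqrt_pos.mpr (by norm_num)
    have h2 : (Real.sqrt 2)^2 = 2 := Real.sq_sqrt (by norm_num)
    have hB4 : B^4 = 3 := by
      rw [hB_def, ← Real.rpow_natCast ((3:ℝ) ^ ((1:ℝ)/4)) 4, ← Real.rpow_mul (by norm_num)]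
      norm_num
    have hA4 : A^4 = |Gf γ 0| := by
      rw [hA_def, ← Real.rpow_natCast (|Gf γ 0| ^ ((1:ℝ)/4)) 4, ← Real.rpow_mul (abs_nonneg _)]
      norm_num
    have hA5 : |Gf γ 0| ^ ((5:ℝ)/4) = A^5 := by
      rw [hA_def, ← Real.rpow_natCast (|Gf γ 0| ^ ((1:ℝ)/4)) 5, ← Real.rpow_mul (abs_nonneg _)]
      norm_num
    have hc : s * A^4 = Gf γ 0 := by rw [hA4, hs_def]; exact real_sign_mul_abs _
    have hs2 : s^2 = 1 := by
      rcases Real.sign_apply_eq_of_ne_zero _ hc₁' with h | h <;> rw [hs_def, h] <;> norm_num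
    have ha34 : (qf γ 0) ^ ((3:ℝ)/4) = A := by
      rw [hq0' hγ, hA_def, ← Real.rpow_mul (abs_nonneg _)]
      norm_num
    have h4 : (4:ℝ) ^ ((3:ℝ)/4) = 2 * Real.sqrt 2 := by
      have e1 : (4:ℝ) = (2:ℝ) ^ (((2:ℕ)):ℝ) := by rw [Real.rpow_natCast]; norm_num
      rw [e1, ← Real.rpow_mul (by norm_num : (0:ℝ) ≤ 2)]
      norm_num
      rw [show (3:ℝ)/2 = 1 + 1/2 by norm_num,
        Real.rpow_add (by norm_num : (0:ℝ) < 2), Real.rpow_one, Real.sqrt_eq_rpow]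
    have h3 : (3:ℝ) ^ ((3:ℝ)/4) = B^3 := by
      rw [hB_def, ← Real.rpow_natCast ((3:ℝ) ^ ((1:ℝ)/4)) 3, ← Real.rpow_mul (by norm_num)]
      norm_num
    have h34 : |Sf γ 0| ^ ((3:ℝ)/4) = B^3 / (2 * Real.sqrt 2) * A := by
      rw [abs_of_pos hS0pos, hS0', Real.mul_rpow (by norm_num) hqpos.le, ha34,
        Real.div_rpow (by norm_num) (by norm_num), h3, h4]
    have hsne : s ≠ 0 := by
      intro h; rw [h] at hs2; norm_num at hs2
    have hAne : A ≠ 0 := hApos.ne'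
    have hBne : B ≠ 0 := hBpos.ne'
    have h2ne : Real.sqrt 2 ≠ 0 := hsq2.ne'
    rw [h34, hmuI, hA5, ← hc]
    field_simp
    linear_combination (-504*(Ef γ 0 - 6*Ff γ 0)) * h2 + (336*(Ef γ 0 - 6*Ff γ 0)*B^4*(1 + A^5)) * hs2 + (336*(Ef γ 0 - 6*Ff γ 0)*(1 + A^5)) * hB4
      + (-336*A^5*(Ef γ 0 - 6*Ff γ 0)*s^2) * hB4
      + (-1008*A^5*(Ef γ 0 - 6*Ff γ 0)) * hs2
  rw [← hval]
  exact T.congr' heq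
end
end

section
/- Let γ : ℝ → ℝ² be a C^∞ regular curve with a generic inflection point at t = 0, with [γ'(t), γ''(t)] ≠ 0 for t ≠ 0 near 0, and suppose that t is the 3/4-arclength parameter, i.e. s_A(t) = sgn(t)·|t|^{4/3} for all t near 0. Let F be the C^∞ extension of the normalized affine curvature function (s_A)²·κ_A at t = 0. Then 32·F'(0)² + 9·F''(0) = 0. -/
noncomputable section
open Real Set Filter Topology

lemma det2_smul_left (l : ℝ) (a b : ℝ × ℝ) : det2 (l • a) b = l * det2 a b := by
  simp [det2, Prod.smul_def, smul_eq_mul]; ring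

lemma hasDerivAt_fst' {f : ℝ → ℝ × ℝ} {f' : ℝ × ℝ} {t : ℝ} (h : HasDerivAt f f' t) :
    HasDerivAt (fun u => (f u).1) f'.1 t := by
  simpa using (h.hasFDerivAt.fst).hasDerivAt

lemma hasDerivAt_snd' {f : ℝ → ℝ × ℝ} {f' : ℝ × ℝ} {t : ℝ} (h : HasDerivAt f f' t) :
    HasDerivAt (fun u => (f u).2) f'.2 t := by
  simpa using (h.hasFDerivAt.snd).hasDerivAt

lemma smooth_iteratedDeriv {f : ℝ → ℝ × ℝ} (hf : ContDiff ℝ (⊤:ℕ∞) f) (n : ℕ) :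
    ContDiff ℝ (⊤:ℕ∞) (iteratedDeriv n f) := by
  induction n with
  | zero => simpa [iteratedDeriv_zero] using hf
  | succ n ih => rw [iteratedDeriv_succ]; exact (contDiff_infty_iff_deriv.mp ih).2

lemma hasDerivAt_iteratedDeriv {f : ℝ → ℝ × ℝ} (hf : ContDiff ℝ (⊤:ℕ∞) f) (n : ℕ) (t : ℝ) :
    HasDerivAt (iteratedDeriv n f) (iteratedDeriv (n+1) f t) t := by
  rw [iteratedDeriv_succ]
  exact (((smooth_iteratedDeriv hf n).differentiable (by simp)) t).hasDerivAt.congr_deriv rfl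

section Gamma
variable {γ : ℝ → ℝ × ℝ} (hγ : ContDiff ℝ (⊤:ℕ∞) γ)
include hγ

lemma cont_iter (n : ℕ) : Continuous (iteratedDeriv n γ) := (smooth_iteratedDeriv hγ n).continuous

lemma hasDerivAt_derivγ (t : ℝ) : HasDerivAt (deriv γ) (iteratedDeriv 2 γ t) t := by
  have h := hasDerivAt_iteratedDeriv hγ 1 t
  rwa [iteratedDeriv_one] at h

lemma cont_derivγ : Continuous (deriv γ) := by
  rw [← iteratedDeriv_one]; exact cont_iter hγ 1

/-- derivative of `δ t = [γ', γ'']` is `[γ', γ''']`. -/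
lemma delta_hasDeriv (t : ℝ) :
    HasDerivAt (fun u => det2 (deriv γ u) (iteratedDeriv 2 γ u))
      (det2 (deriv γ t) (iteratedDeriv 3 γ t)) t := by
  have h := hasDerivAt_det2 (hasDerivAt_derivγ hγ t) (hasDerivAt_iteratedDeriv hγ 2 t)
  simpa [det2_self] using h

/-- derivative of `A t = [γ', γ''']` is `[γ'', γ'''] + [γ', γ⁗]`. -/
lemma A_hasDeriv (t : ℝ) :
    HasDerivAt (fun u => det2 (deriv γ u) (iteratedDeriv 3 γ u))
      (det2 (iteratedDeriv 2 γ t) (iteratedDeriv 3 γ t)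
        + det2 (deriv γ t) (iteratedDeriv 4 γ t)) t :=
  hasDerivAt_det2 (hasDerivAt_derivγ hγ t) (hasDerivAt_iteratedDeriv hγ 3 t)

/-- derivative of `B t = [γ'', γ''']` is `[γ'', γ⁗]`. -/
lemma B_hasDeriv (t : ℝ) :
    HasDerivAt (fun u => det2 (iteratedDeriv 2 γ u) (iteratedDeriv 3 γ u))
      (det2 (iteratedDeriv 2 γ t) (iteratedDeriv 4 γ t)) t := by
  have h := hasDerivAt_det2 (hasDerivAt_iteratedDeriv hγ 2 t) (hasDerivAt_iteratedDeriv hγ 3 t)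
  simpa [det2_self] using h

lemma Bd_hasDeriv (t : ℝ) :
    HasDerivAt (fun u => det2 (iteratedDeriv 2 γ u) (iteratedDeriv 4 γ u))
      (det2 (iteratedDeriv 3 γ t) (iteratedDeriv 4 γ t)
        + det2 (iteratedDeriv 2 γ t) (iteratedDeriv 5 γ t)) t :=
  hasDerivAt_det2 (hasDerivAt_iteratedDeriv hγ 2 t) (hasDerivAt_iteratedDeriv hγ 4 t)

lemma cont_delta : Continuous (fun u => det2 (deriv γ u) (iteratedDeriv 2 γ u)) := by
  unfold det2
  exact ((cont_derivγ hγ).fst.mul (cont_iter hγ 2).snd).sub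
    ((cont_derivγ hγ).snd.mul (cont_iter hγ 2).fst)

lemma sA_hasDeriv (t : ℝ) :
    HasDerivAt (sA γ) (|det2 (deriv γ t) (iteratedDeriv 2 γ t)| ^ ((1:ℝ)/3)) t := by
  have hcont : Continuous (fun u => |det2 (deriv γ u) (iteratedDeriv 2 γ u)| ^ ((1:ℝ)/3)) :=
    (cont_delta hγ).abs.rpow_const (fun x => Or.inr (by norm_num))
  exact intervalIntegral.integral_hasDerivAt_right (hcont.intervalIntegrable 0 t)
    hcont.stronglyMeasurable.stronglyMeasurableAtFilter hcont.continuousAt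

end Gamma

/-- derivative of `sgn t * |t|^{4/3}` at `t ≠ 0`. -/
lemma rhs_hasDeriv {t : ℝ} (ht : t ≠ 0) :
    HasDerivAt (fun u => Real.sign u * |u| ^ ((4:ℝ)/3)) ((4/3) * |t| ^ ((1:ℝ)/3)) t := by
  rcases ht.lt_or_gt with h | h
  · -- t < 0
    have h1 : HasDerivAt (fun x : ℝ => x ^ ((4:ℝ)/3)) ((4/3) * (-t) ^ ((4:ℝ)/3 - 1)) (-t) :=
      Real.hasDerivAt_rpow_const (Or.inl (by linarith))
    have h2 : HasDerivAt (fun u : ℝ => -u) (-1) t := by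
      simpa using (hasDerivAt_neg t)
    have h3 := (h1.comp t h2).neg
    have heq : (fun u => Real.sign u * |u| ^ ((4:ℝ)/3)) =ᶠ[𝓝 t]
        (fun u => -((fun x : ℝ => x ^ ((4:ℝ)/3)) ((fun u : ℝ => -u) u))) := by
      filter_upwards [Iio_mem_nhds h] with u hu
      rw [Real.sign_of_neg hu, abs_of_neg hu]
      ring_nf
    have h4 := h3.congr_of_eventuallyEq heq
    refine h4.congr_deriv ?_
    rw [abs_of_neg h]
    have : ((4:ℝ)/3 - 1) = (1:ℝ)/3 := by norm_num
    rw [this]; ring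
  · -- t > 0
    have h1 : HasDerivAt (fun x : ℝ => x ^ ((4:ℝ)/3)) ((4/3) * t ^ ((4:ℝ)/3 - 1)) t :=
      Real.hasDerivAt_rpow_const (Or.inl (ne_of_gt h))
    have heq : (fun u => Real.sign u * |u| ^ ((4:ℝ)/3)) =ᶠ[𝓝 t]
        (fun x : ℝ => x ^ ((4:ℝ)/3)) := by
      filter_upwards [Ioi_mem_nhds h] with u hu
      rw [Real.sign_of_pos hu, abs_of_pos hu, one_mul]
    have h4 := h1.congr_of_eventuallyEq heq
    refine h4.congr_deriv ?_
    rw [abs_of_pos h]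
    norm_num

/-- At a generic inflection point parametrized by the 3/4-arclength parameter
(`s_A(t) = sgn(t)·|t|^{4/3}` near `0`), the `C^∞` extension `F` of `(s_A)²·κ_A`
satisfies `32·F'(0)² + 9·F''(0) = 0`. -/
theorem stmt_17 (γ : ℝ → ℝ × ℝ) (hγ : ContDiff ℝ (⊤:ℕ∞) γ)
    (hinf : HasGenericInflection γ)
    (hreg : ∀ᶠ t in 𝓝[≠] (0:ℝ), det2 (deriv γ t) (iteratedDeriv 2 γ t) ≠ 0)
    (hpar : ∀ᶠ t in 𝓝 (0:ℝ), sA γ t = Real.sign t * |t| ^ ((4:ℝ)/3))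
    (F : ℝ → ℝ) (ε : ℝ) (hε : 0 < ε)
    (hF : ContDiffOn ℝ (⊤:ℕ∞) F (Set.Ioo (-ε) ε))
    (hFeq : ∀ t ∈ Set.Ioo (-ε) ε, t ≠ 0 → F t = sA γ t ^ 2 * kappaA γ t) :
    32 * deriv F 0 ^ 2 + 9 * iteratedDeriv 2 F 0 = 0 := by
  obtain ⟨hv, hδ0, hc⟩ := hinf
  set c : ℝ := det2 (deriv γ 0) (iteratedDeriv 3 γ 0) with hcdef
  set δf : ℝ → ℝ := fun u => det2 (deriv γ u) (iteratedDeriv 2 γ u) with hδfdef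
  -- extract radii
  rw [Metric.eventually_nhds_iff] at hpar
  obtain ⟨a₁, ha₁, hpar⟩ := hpar
  set a : ℝ := min (min a₁ (1:ℝ)) ε with hadef
  have ha : 0 < a := lt_min (lt_min ha₁ one_pos) hε
  have haε : a ≤ ε := min_le_right _ _
  have hsAeq : ∀ t : ℝ, |t| < a → sA γ t = Real.sign t * |t| ^ ((4:ℝ)/3) := by
    intro t ht
    apply hpar
    rw [Real.dist_0_eq_abs]
    exact lt_of_lt_of_le ht (le_trans (min_le_left _ _) (min_le_left _ _))
  -- |δ| = 64/27 |t| on the interval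
  have habs : ∀ t : ℝ, |t| < a → |δf t| = 64/27 * |t| := by
    intro t ht
    rcases eq_or_ne t 0 with rfl | h0
    · simp [hδfdef, hδ0]
    · have hmem : Ioo (-a) a ∈ 𝓝 t := Ioo_mem_nhds (abs_lt.mp ht).1 (abs_lt.mp ht).2
      have heq : (fun u => Real.sign u * |u| ^ ((4:ℝ)/3)) =ᶠ[𝓝 t] sA γ := by
        filter_upwards [hmem] with u hu
        exact (hsAeq u (abs_lt.mpr hu)).symm
      have hd1 := (sA_hasDeriv hγ t).congr_of_eventuallyEq heq
      have h13 : |δf t| ^ ((1:ℝ)/3) = (4/3) * |t| ^ ((1:ℝ)/3) := hd1.unique (rhs_hasDeriv h0)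
      have hcube : (|δf t| ^ ((1:ℝ)/3)) ^ (3:ℕ) = ((4/3) * |t| ^ ((1:ℝ)/3)) ^ (3:ℕ) := by
        rw [h13]
      rw [← Real.rpow_natCast (|δf t| ^ ((1:ℝ)/3)) 3, ← Real.rpow_mul (abs_nonneg _)] at hcube
      norm_num at hcube
      rw [hcube, mul_pow, ← Real.rpow_natCast (|t| ^ ((1:ℝ)/3)) 3,
        ← Real.rpow_mul (abs_nonneg _)]
      norm_num
  -- slope limit
  have hslope : Tendsto (fun t => δf t / t) (𝓝[≠] (0:ℝ)) (𝓝 c) := by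
    have h := hasDerivAt_iff_tendsto_slope.mp (delta_hasDeriv hγ 0)
    apply h.congr
    intro t
    simp [slope_def_field, hδfdef]
    rw [show det2 (deriv γ 0) (iteratedDeriv 2 γ 0) = 0 from hδ0]
    ring
  have hcabs : |c| = 64/27 := by
    have h1 : Tendsto (fun t => |δf t / t|) (𝓝[≠] (0:ℝ)) (𝓝 |c|) := hslope.abs
    have h2 : (fun t => |δf t / t|) =ᶠ[𝓝[≠] (0:ℝ)] (fun _ => (64:ℝ)/27) := by
      have : ∀ᶠ t in 𝓝[≠] (0:ℝ), |δf t / t| = (64:ℝ)/27 := by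
        rw [eventually_nhdsWithin_iff]
        filter_upwards [Metric.ball_mem_nhds (0:ℝ) ha] with u hu hu0
        have hu' : |u| < a := by rwa [Metric.mem_ball, Real.dist_0_eq_abs] at hu
        have hu0' : u ≠ 0 := by simpa using hu0
        rw [abs_div, habs u hu', mul_div_assoc, div_self (abs_ne_zero.mpr hu0'), mul_one]
      exact this
    exact tendsto_nhds_unique (h1.congr' h2) tendsto_const_nhds
  -- eventually δ t = c t near 0
  have hev : ∀ᶠ t in 𝓝[≠] (0:ℝ), δf t = c * t := by
    have h2 : ∀ᶠ t in 𝓝[≠] (0:ℝ), |δf t / t - c| < |c| := by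
      have hball := hslope.eventually (Metric.ball_mem_nhds c (abs_pos.mpr hc))
      filter_upwards [hball] with u hu
      rwa [Real.dist_eq] at hu
    have h3 : ∀ᶠ t in 𝓝[≠] (0:ℝ), |δf t / t| = |c| := by
      rw [eventually_nhdsWithin_iff]
      filter_upwards [Metric.ball_mem_nhds (0:ℝ) ha] with u hu hu0
      have hu' : |u| < a := by rwa [Metric.mem_ball, Real.dist_0_eq_abs] at hu
      have hu0' : u ≠ 0 := by simpa using hu0
      rw [abs_div, habs u hu', hcabs, mul_div_assoc, div_self (abs_ne_zero.mpr hu0'), mul_one]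
    have h4 : ∀ᶠ t in 𝓝[≠] (0:ℝ), t ≠ 0 := by
      rw [eventually_nhdsWithin_iff]
      filter_upwards with u hu using by simpa using hu
    filter_upwards [h2, h3, h4] with u hu2 hu3 hu4
    have : δf u / u = c := by
      rcases abs_eq_abs.mp hu3 with h | h
      · exact h
      · exfalso
        rw [h] at hu2
        have : |(-c) - c| = 2 * |c| := by
          rw [show -c - c = -(2*c) by ring, abs_neg, abs_mul]
          norm_num
        rw [this] at hu2
        have := abs_pos.mpr hc
        linarith
    field_simp at this
    linarith [this]
  rw [eventually_nhdsWithin_iff, Metric.eventually_nhds_iff] at hev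
  obtain ⟨b, hb, hev⟩ := hev
  have hsmall : ∀ u : ℝ, u ≠ 0 → |u| < b → δf u = c * u := by
    intro u hu0 hub
    exact hev (by rwa [Real.dist_0_eq_abs]) (by simpa using hu0)
  -- global linearity on the interval
  have hlin : ∀ t : ℝ, |t| < a → δf t = c * t := by
    intro t ht
    rcases eq_or_ne t 0 with rfl | h0
    · simp [hδfdef, hδ0]
    by_contra hne'
    have habs_t : |δf t| = |c * t| := by rw [habs t ht, abs_mul, hcabs]
    have hneg : δf t = -(c * t) := by
      rcases abs_eq_abs.mp habs_t with h | h
      · exact absurd h hne'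
      · exact h
    rcases h0.lt_or_gt with htneg | htpos
    · -- t < 0
      set t₁ : ℝ := max t (-(b/2)) with ht₁def
      have ht₁neg : t₁ < 0 := max_lt htneg (by linarith)
      have ht₁b : |t₁| < b := by
        rw [abs_of_neg ht₁neg]
        have : -(b/2) ≤ t₁ := le_max_right _ _
        linarith
      have h₁ : δf t₁ = c * t₁ := hsmall t₁ (ne_of_lt ht₁neg) ht₁b
      have hle : t ≤ t₁ := le_max_left _ _
      have hcont : ContinuousOn (fun u => δf u / u) (uIcc t t₁) := by
        rw [uIcc_of_le hle]
        apply ((cont_delta hγ).continuousOn).div continuousOn_id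
        intro u hu
        exact ne_of_lt (lt_of_le_of_lt hu.2 ht₁neg)
      have h0mem : (0:ℝ) ∈ uIcc ((fun u => δf u / u) t) ((fun u => δf u / u) t₁) := by
        have e1 : δf t / t = -c := by rw [hneg]; field_simp
        have e2 : δf t₁ / t₁ = c := by
          rw [h₁]; exact mul_div_cancel_right₀ c (ne_of_lt ht₁neg)
        show (0:ℝ) ∈ uIcc (δf t / t) (δf t₁ / t₁)
        rw [e1, e2]
        rcases le_total 0 c with h | h
        · exact mem_uIcc.mpr (Or.inl ⟨by linarith, h⟩)
        · exact mem_uIcc.mpr (Or.inr ⟨h, by linarith⟩)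
      obtain ⟨s, hs, hqs⟩ := intermediate_value_uIcc hcont h0mem
      rw [uIcc_of_le hle] at hs
      have hsneg : s < 0 := lt_of_le_of_lt hs.2 ht₁neg
      have hδs : δf s = 0 := by
        rcases div_eq_zero_iff.mp hqs with h | h
        · exact h
        · exact absurd h (ne_of_lt hsneg)
      have hsa : |s| < a := by
        rw [abs_of_neg hsneg]
        have h1 : -a < t := (abs_lt.mp ht).1
        have := hs.1
        linarith
      have := habs s hsa
      rw [hδs, abs_zero] at this
      have : |s| = 0 := by linarith
      exact absurd (abs_eq_zero.mp this) (ne_of_lt hsneg)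
    · -- t > 0
      set t₁ : ℝ := min t (b/2) with ht₁def
      have ht₁pos : 0 < t₁ := lt_min htpos (by linarith)
      have ht₁b : |t₁| < b := by
        rw [abs_of_pos ht₁pos]
        have : t₁ ≤ b/2 := min_le_right _ _
        linarith
      have h₁ : δf t₁ = c * t₁ := hsmall t₁ (ne_of_gt ht₁pos) ht₁b
      have hle : t₁ ≤ t := min_le_left _ _
      have hcont : ContinuousOn (fun u => δf u / u) (uIcc t₁ t) := by
        rw [uIcc_of_le hle]
        apply ((cont_delta hγ).continuousOn).div continuousOn_id
        intro u hu
        exact ne_of_gt (lt_of_lt_of_le ht₁pos hu.1)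
      have h0mem : (0:ℝ) ∈ uIcc ((fun u => δf u / u) t₁) ((fun u => δf u / u) t) := by
        have e1 : δf t / t = -c := by rw [hneg]; field_simp
        have e2 : δf t₁ / t₁ = c := by
          rw [h₁]; exact mul_div_cancel_right₀ c (ne_of_gt ht₁pos)
        show (0:ℝ) ∈ uIcc (δf t₁ / t₁) (δf t / t)
        rw [e1, e2]
        rcases le_total 0 c with h | h
        · exact mem_uIcc.mpr (Or.inr ⟨by linarith, h⟩)
        · exact mem_uIcc.mpr (Or.inl ⟨h, by linarith⟩)
      obtain ⟨s, hs, hqs⟩ := intermediate_value_uIcc hcont h0mem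
      rw [uIcc_of_le hle] at hs
      have hspos : 0 < s := lt_of_lt_of_le ht₁pos hs.1
      have hδs : δf s = 0 := by
        rcases div_eq_zero_iff.mp hqs with h | h
        · exact h
        · exact absurd h (ne_of_gt hspos)
      have hsa : |s| < a := by
        rw [abs_of_pos hspos]
        have h1 : t < a := (abs_lt.mp ht).2
        have := hs.2
        linarith
      have := habs s hsa
      rw [hδs, abs_zero] at this
      have : |s| = 0 := by linarith
      exact absurd (abs_eq_zero.mp this) (ne_of_gt hspos)
  -- the bracket [γ', γ'''] is constantly c on the interval
  have hAc : ∀ t : ℝ, |t| < a → det2 (deriv γ t) (iteratedDeriv 3 γ t) = c := by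
    intro t ht
    have hmem : Ioo (-a) a ∈ 𝓝 t := Ioo_mem_nhds (abs_lt.mp ht).1 (abs_lt.mp ht).2
    have heq : (fun u => c * u) =ᶠ[𝓝 t] δf := by
      filter_upwards [hmem] with u hu
      exact (hlin u (abs_lt.mpr hu)).symm
    have h1 : HasDerivAt (fun u => c * u) (det2 (deriv γ t) (iteratedDeriv 3 γ t)) t :=
      (delta_hasDeriv hγ t).congr_of_eventuallyEq heq
    have h2 : HasDerivAt (fun u => c * u) c t := by
      simpa using (hasDerivAt_id t).const_mul c
    exact h1.unique h2
  -- and its derivative vanishes: [γ', γ⁗] = -[γ'', γ''']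
  have hA2B : ∀ t : ℝ, |t| < a → det2 (deriv γ t) (iteratedDeriv 4 γ t)
      = - det2 (iteratedDeriv 2 γ t) (iteratedDeriv 3 γ t) := by
    intro t ht
    have hmem : Ioo (-a) a ∈ 𝓝 t := Ioo_mem_nhds (abs_lt.mp ht).1 (abs_lt.mp ht).2
    have heq : (fun _ : ℝ => c) =ᶠ[𝓝 t] (fun u => det2 (deriv γ u) (iteratedDeriv 3 γ u)) := by
      filter_upwards [hmem] with u hu
      exact (hAc u (abs_lt.mpr hu)).symm
    have h1 : HasDerivAt (fun _ : ℝ => c)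
        (det2 (iteratedDeriv 2 γ t) (iteratedDeriv 3 γ t)
          + det2 (deriv γ t) (iteratedDeriv 4 γ t)) t :=
      (A_hasDeriv hγ t).congr_of_eventuallyEq heq
    have h2 := h1.unique (hasDerivAt_const t c)
    linarith
  -- the smooth extension candidate G
  set G : ℝ → ℝ := fun t =>
    (9 * c * (t * det2 (iteratedDeriv 2 γ t) (iteratedDeriv 3 γ t)) - 5 * c^2)
      / (9 * |c| ^ ((8:ℝ)/3)) with hGdef
  have hcP : (0:ℝ) < |c| ^ ((8:ℝ)/3) := Real.rpow_pos_of_pos (abs_pos.mpr hc) _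
  have hFG : ∀ t : ℝ, |t| < a → t ≠ 0 → F t = G t := by
    intro t ht h0
    have htε : t ∈ Ioo (-ε) ε := by
      constructor
      · linarith [(abs_lt.mp ht).1]
      · linarith [(abs_lt.mp ht).2]
    rw [hFeq t htε h0]
    have hδt : det2 (deriv γ t) (iteratedDeriv 2 γ t) = c * t := hlin t ht
    have hAt := hAc t ht
    have hA2t := hA2B t ht
    unfold kappaA
    rw [hδt, hAt, hA2t, hsAeq t ht]
    have hsq : (Real.sign t * |t| ^ ((4:ℝ)/3))^2 = |t| ^ ((8:ℝ)/3) := by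
      rw [mul_pow]
      have h1 : Real.sign t ^ 2 = 1 := by
        rcases h0.lt_or_gt with h | h
        · rw [Real.sign_of_neg h]; norm_num
        · rw [Real.sign_of_pos h]; norm_num
      rw [h1, one_mul, ← Real.rpow_natCast (|t| ^ ((4:ℝ)/3)) 2,
        ← Real.rpow_mul (abs_nonneg _)]
      norm_num
    have habst : |c * t| ^ ((8:ℝ)/3) = |c| ^ ((8:ℝ)/3) * |t| ^ ((8:ℝ)/3) := by
      rw [abs_mul, Real.mul_rpow (abs_nonneg _) (abs_nonneg _)]
    rw [hsq, habst, hGdef]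
    have hP8 : |t| ^ ((8:ℝ)/3) ≠ 0 := ne_of_gt (Real.rpow_pos_of_pos (abs_pos.mpr h0) _)
    field_simp
    ring
  -- derivative of G everywhere
  have hGderiv : ∀ t : ℝ, HasDerivAt G
      ((9 * c * (det2 (iteratedDeriv 2 γ t) (iteratedDeriv 3 γ t)
        + t * det2 (iteratedDeriv 2 γ t) (iteratedDeriv 4 γ t))) / (9 * |c| ^ ((8:ℝ)/3))) t := by
    intro t
    have hB := B_hasDeriv hγ t
    have h1 := (hasDerivAt_id t).mul hB
    have h2 := ((h1.const_mul (9*c)).sub_const (5*c^2)).div_const (9 * |c| ^ ((8:ℝ)/3))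
    rw [hGdef]
    simp only [id_eq] at h2
    convert h2 using 1
    all_goals first | rfl | ring
  -- F and G agree near 0
  have hF0 : ContinuousAt F 0 :=
    hF.continuousOn.continuousAt (Ioo_mem_nhds (by linarith) hε)
  have hFGev : ∀ᶠ t in 𝓝[≠] (0:ℝ), F t = G t := by
    rw [eventually_nhdsWithin_iff]
    filter_upwards [Metric.ball_mem_nhds (0:ℝ) ha] with u hu hu0
    exact hFG u (by rwa [Metric.mem_ball, Real.dist_0_eq_abs] at hu) (by simpa using hu0)
  have hF0G0 : F 0 = G 0 := by
    have l1 : Tendsto F (𝓝[≠] (0:ℝ)) (𝓝 (F 0)) := hF0.continuousWithinAt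
    have l2 : Tendsto G (𝓝[≠] (0:ℝ)) (𝓝 (G 0)) :=
      (hGderiv 0).continuousAt.continuousWithinAt
    exact tendsto_nhds_unique (l1.congr' hFGev) l2
  have hFGnhds : F =ᶠ[𝓝 (0:ℝ)] G := by
    rw [eventually_nhdsWithin_iff] at hFGev
    filter_upwards [hFGev] with u hu
    rcases eq_or_ne u 0 with rfl | h
    · exact hF0G0
    · exact hu (by simpa using h)
  -- transfer derivatives
  have hd1 : deriv F 0 = deriv G 0 := hFGnhds.deriv_eq
  have hd2 : iteratedDeriv 2 F 0 = iteratedDeriv 2 G 0 := by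
    rw [iteratedDeriv_succ, iteratedDeriv_one, iteratedDeriv_succ, iteratedDeriv_one]
    exact (hFGnhds.deriv).deriv_eq
  -- the inflection direction
  obtain ⟨l, hl⟩ : ∃ l : ℝ, iteratedDeriv 2 γ 0 = l • (deriv γ 0) := by
    have hv1 : (deriv γ 0).1 ≠ 0 ∨ (deriv γ 0).2 ≠ 0 := by
      by_contra hcon
      push_neg at hcon
      exact hv (Prod.ext hcon.1 hcon.2)
    have hδ0' : (deriv γ 0).1 * (iteratedDeriv 2 γ 0).2
        - (deriv γ 0).2 * (iteratedDeriv 2 γ 0).1 = 0 := hδ0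
    rcases hv1 with h | h
    · refine ⟨(iteratedDeriv 2 γ 0).1 / (deriv γ 0).1, Prod.ext ?_ ?_⟩
      · simp [Prod.smul_def, smul_eq_mul]
        field_simp
      · simp [Prod.smul_def, smul_eq_mul]
        field_simp
        linarith [hδ0']
    · refine ⟨(iteratedDeriv 2 γ 0).2 / (deriv γ 0).2, Prod.ext ?_ ?_⟩
      · simp [Prod.smul_def, smul_eq_mul]
        field_simp
        linarith [hδ0']
      · simp [Prod.smul_def, smul_eq_mul]
        field_simp
  have hB0 : det2 (iteratedDeriv 2 γ 0) (iteratedDeriv 3 γ 0) = l * c := by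
    rw [hl, det2_smul_left]
  have hBd0 : det2 (iteratedDeriv 2 γ 0) (iteratedDeriv 4 γ 0) = -(l^2) * c := by
    rw [hl, det2_smul_left, hA2B 0 (by simpa using ha), hB0]
    ring
  -- numerics
  have hPval : |c| ^ ((8:ℝ)/3) = ((4:ℝ)/3)^(8:ℕ) := by
    rw [hcabs, show (64:ℝ)/27 = ((4:ℝ)/3)^(3:ℕ) by norm_num,
      ← Real.rpow_natCast ((4:ℝ)/3) 3, ← Real.rpow_mul (by norm_num : (0:ℝ) ≤ 4/3)]
    rw [show ((3:ℕ):ℝ) * (8/3) = ((8:ℕ):ℝ) by push_cast; norm_num]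
    rw [Real.rpow_natCast]
  have hc2 : c^2 = 4096/729 := by
    rw [← sq_abs, hcabs]; norm_num
  have hF1 : deriv F 0 = (9:ℝ)/16 * l := by
    rw [hd1, (hGderiv 0).deriv, hB0, hBd0, hPval]
    have he : 9 * c * (l * c + 0 * (-(l^2) * c)) = 9 * l * c^2 := by ring
    rw [he, hc2]
    rw [div_eq_iff (by positivity : (9:ℝ) * ((4:ℝ)/3)^(8:ℕ) ≠ 0)]
    ring
  have hF2 : iteratedDeriv 2 F 0 = -(9:ℝ)/8 * l^2 := by
    rw [hd2, iteratedDeriv_succ, iteratedDeriv_one]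
    have hderivG : deriv G = fun t =>
        ((9 * c * (det2 (iteratedDeriv 2 γ t) (iteratedDeriv 3 γ t)
          + t * det2 (iteratedDeriv 2 γ t) (iteratedDeriv 4 γ t))) / (9 * |c| ^ ((8:ℝ)/3))) :=
      funext fun t => (hGderiv t).deriv
    rw [hderivG]
    have hBd := Bd_hasDeriv hγ 0
    have hB := B_hasDeriv hγ 0
    have h1 := (hB.add ((hasDerivAt_id 0).mul hBd)).const_mul (9*c)
    have h2 := h1.div_const (9 * |c| ^ ((8:ℝ)/3))
    simp only [id_eq, Pi.add_apply, Pi.mul_apply] at h2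
    rw [h2.deriv, hBd0, hPval]
    have he : 9 * c * (-(l^2) * c + (1 * (-(l^2) * c)
        + 0 * (det2 (iteratedDeriv 3 γ 0) (iteratedDeriv 4 γ 0)
          + det2 (iteratedDeriv 2 γ 0) (iteratedDeriv 5 γ 0))))
        = -(18 * l^2 * c^2) := by ring
    rw [he, hc2]
    rw [div_eq_iff (by positivity : (9:ℝ) * ((4:ℝ)/3)^(8:ℕ) ≠ 0)]
    ring
  rw [hF1, hF2]
  ring
end
end

section
/- Let φ : ℝ → ℝ be a C^∞ function near t = 0 and let α > 0 be a real number. Define Φ(t) := ∫₀ᵗ |u|^α·φ(u) du and, for t ≠ 0, f(t) := Φ(t)/(sgn(t)·|t|^{1+α}). Then f extends to a C^∞ function at t = 0, and its value at 0 is φ(0)/(1+α). -/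
noncomputable section
open Real Set Filter Topology

open MeasureTheory Metric in
/-- Division lemma: for `φ` smooth near `0` and `α > 0`, the function
`f(t) = (∫₀ᵗ |u|^α φ(u) du)/(sgn(t)·|t|^{1+α})` extends to a `C^∞` function at `0`
with value `φ(0)/(1+α)`. -/
theorem stmt_19 (φ : ℝ → ℝ) (ε : ℝ) (hε : 0 < ε)
    (hφ : ContDiffOn ℝ (⊤:ℕ∞) φ (Set.Ioo (-ε) ε)) (α : ℝ) (hα : 0 < α) :
    ∃ δ > (0:ℝ), ∃ f : ℝ → ℝ,
      ContDiffOn ℝ (⊤:ℕ∞) f (Set.Ioo (-δ) δ) ∧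
      (∀ t ∈ Set.Ioo (-δ) δ, t ≠ 0 →
        f t = (∫ u in (0:ℝ)..t, |u| ^ α * φ u) / (Real.sign t * |t| ^ (1 + α))) ∧
      f 0 = φ 0 / (1 + α) := by
  -- a smooth compactly supported modification of φ
  set b : ContDiffBump (0:ℝ) := ⟨ε/4, ε/2, by linarith, by linarith⟩ with hbdef
  set ψ : ℝ → ℝ := fun x => b x * φ x with hψdef
  have hψsm : ContDiff ℝ (⊤:ℕ∞) ψ := by
    rw [contDiff_iff_contDiffAt]
    intro x
    by_cases hx : x ∈ Set.Ioo (-ε) ε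
    · exact (b.contDiff (n := ⊤)).contDiffAt.mul (hφ.contDiffAt (isOpen_Ioo.mem_nhds hx))
    · have hx' : ε/2 < |x| := by
        rw [Set.mem_Ioo, not_and_or, not_lt, not_lt] at hx
        rcases hx with h | h
        · rw [abs_of_nonpos (by linarith)]; linarith
        · rw [abs_of_nonneg (by linarith)]; linarith
      have hev : ψ =ᶠ[𝓝 x] (fun _ => 0) := by
        filter_upwards [isOpen_lt continuous_const continuous_abs |>.mem_nhds hx'] with y hy
        have : b y = 0 := b.zero_of_le_dist (by simpa [Real.dist_eq] using le_of_lt hy)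
        simp [hψdef, this]
      exact (contDiffAt_const (c := (0:ℝ))).congr_of_eventuallyEq hev
  have hψeq : ∀ x : ℝ, |x| ≤ ε/4 → ψ x = φ x := by
    intro x hx
    have : b x = 1 := b.one_of_mem_closedBall (by simpa [Real.dist_eq] using hx)
    simp [hψdef, this]
  have hψcs : HasCompactSupport ψ := b.hasCompactSupport.mul_right
  -- iterated derivatives of ψ
  have hit : ∀ n : ℕ, ContDiff ℝ (⊤:ℕ∞) (iteratedDeriv n ψ) := by
    intro n; rw [iteratedDeriv_eq_iterate]; exact hψsm.iterate_deriv n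
  have hitcs : ∀ n : ℕ, HasCompactSupport (iteratedDeriv n ψ) := by
    intro n; rw [iteratedDeriv_eq_iterate]
    induction n with
    | zero => exact hψcs
    | succ k ih => rw [Function.iterate_succ_apply']; exact ih.deriv
  have hbound : ∀ n : ℕ, ∃ C : ℝ, ∀ x, |iteratedDeriv n ψ x| ≤ C := by
    intro n
    obtain ⟨C, hC⟩ := (hitcs n).exists_bound_of_continuous (hit n).continuous
    exact ⟨C, fun x => by simpa using hC x⟩
  have hder : ∀ n : ℕ, ∀ y : ℝ,
      HasDerivAt (iteratedDeriv n ψ) (iteratedDeriv (n+1) ψ y) y := by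
    intro n y
    have h1 : DifferentiableAt ℝ (iteratedDeriv n ψ) y :=
      ((hit n).differentiable (by simp)) y
    have := h1.hasDerivAt
    rwa [show deriv (iteratedDeriv n ψ) y = iteratedDeriv (n+1) ψ y by
      rw [iteratedDeriv_succ]] at this
  -- the parametric integrals
  set F : ℕ → ℝ → ℝ := fun n t =>
    ∫ s in (0:ℝ)..1, |s| ^ α * s ^ n * iteratedDeriv n ψ (t * s) with hFdef
  have hcont : ∀ n : ℕ, ∀ t : ℝ, Continuous fun s : ℝ =>
      |s| ^ α * s ^ n * iteratedDeriv n ψ (t * s) := by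
    intro n t
    exact ((continuous_abs.rpow_const (fun x => Or.inr hα.le)).mul (continuous_pow n)).mul
      ((hit n).continuous.comp (continuous_const.mul continuous_id))
  have hFderiv : ∀ n : ℕ, ∀ x₀ : ℝ, HasDerivAt (F n) (F (n+1) x₀) x₀ := by
    intro n x₀
    obtain ⟨C, hC⟩ := hbound (n+1)
    have key := intervalIntegral.hasDerivAt_integral_of_dominated_loc_of_deriv_le
      (μ := volume) (a := (0:ℝ)) (b := (1:ℝ)) (x₀ := x₀)
      (F := fun x s => |s| ^ α * s ^ n * iteratedDeriv n ψ (x * s))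
      (F' := fun x s => |s| ^ α * s ^ (n+1) * iteratedDeriv (n+1) ψ (x * s))
      (bound := fun _ => max C 0)
      (s := Metric.ball x₀ 1) (Metric.ball_mem_nhds x₀ one_pos)
      (Filter.Eventually.of_forall fun x => (hcont n x).aestronglyMeasurable)
      ((hcont n x₀).intervalIntegrable _ _)
      ((hcont (n+1) x₀).aestronglyMeasurable)
      ?_ (intervalIntegrable_const) ?_
    · exact key.2
    · refine Filter.Eventually.of_forall fun s hs x _ => ?_
      rw [Set.uIoc_of_le zero_le_one] at hs
      have hs0 : 0 < s := hs.1
      have hs1 : s ≤ 1 := hs.2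
      have h1 : |s| ^ α ≤ 1 := by
        rw [abs_of_pos hs0]
        exact Real.rpow_le_one hs0.le hs1 hα.le
      have h2 : s ^ (n+1) ≤ 1 := pow_le_one₀ hs0.le hs1
      have h3 : |iteratedDeriv (n+1) ψ (x * s)| ≤ max C 0 := le_trans (hC _) (le_max_left _ _)
      have h4 : (0:ℝ) ≤ |s| ^ α := Real.rpow_nonneg (abs_nonneg s) α
      have h5 : (0:ℝ) ≤ s ^ (n+1) := pow_nonneg hs0.le _
      calc ‖|s| ^ α * s ^ (n+1) * iteratedDeriv (n+1) ψ (x * s)‖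
          = |s| ^ α * s ^ (n+1) * |iteratedDeriv (n+1) ψ (x * s)| := by
            rw [Real.norm_eq_abs, abs_mul, abs_of_nonneg (mul_nonneg h4 h5)]
        _ ≤ 1 * 1 * max C 0 := by
            apply mul_le_mul (mul_le_mul h1 h2 h5 zero_le_one) h3 (abs_nonneg _)
            norm_num
        _ = max C 0 := by ring
    · refine Filter.Eventually.of_forall fun s _ x _ => ?_
      have h1 : HasDerivAt (fun x : ℝ => x * s) s x := hasDerivAt_mul_const s
      have h2 := (hder n (x * s)).comp x h1
      have h3 := h2.const_mul (|s| ^ α * s ^ n)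
      convert h3 using 1
      all_goals first | rfl | ring
  have hFcont : ∀ n : ℕ, Continuous (F n) := by
    intro n
    exact continuous_iff_continuousAt.2 fun t => (hFderiv n t).differentiableAt.continuousAt
  have hFsm : ∀ m : ℕ, ∀ n : ℕ, ContDiff ℝ (m : ℕ∞) (F n) := by
    intro m
    induction m with
    | zero => intro n; exact contDiff_zero.2 (hFcont n)
    | succ k ih =>
      intro n
      have hd : deriv (F n) = F (n+1) := funext fun t => (hFderiv n t).deriv
      have : ContDiff ℝ ((k : ℕ∞) + 1) (F n) := by
        rw [contDiff_succ_iff_deriv]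
        refine ⟨fun t => (hFderiv n t).differentiableAt, ?_, ?_⟩
        · intro h; exact absurd h (by simp)
        · rw [hd]; exact ih (n+1)
      exact_mod_cast this
  have hFtop : ContDiff ℝ (⊤:ℕ∞) (F 0) := contDiff_infty.2 fun m => hFsm m 0
  -- conclusion
  refine ⟨ε/4, by linarith, F 0, hFtop.contDiffOn, ?_, ?_⟩
  · intro t ht htne
    have htabs : |t| < ε/4 := by
      rw [abs_lt]; exact ⟨by linarith [ht.1], by linarith [ht.2]⟩
    have habs : Real.sign t * |t| = t := by
      rcases lt_or_gt_of_ne htne with h | h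
      · rw [Real.sign_of_neg h, abs_of_neg h]; ring
      · rw [Real.sign_of_pos h, abs_of_pos h]; ring
    have htpos : (0:ℝ) < |t| := abs_pos.2 htne
    -- replace φ by ψ in the integral
    have hstep1 : (∫ u in (0:ℝ)..t, |u| ^ α * φ u) = ∫ u in (0:ℝ)..t, |u| ^ α * ψ u := by
      apply intervalIntegral.integral_congr
      intro u hu
      show |u| ^ α * φ u = |u| ^ α * ψ u
      rw [Set.mem_uIcc] at hu
      have hu' : |u| ≤ |t| := by
        have h1 : -|t| ≤ t := neg_abs_le t
        have h2 : t ≤ |t| := le_abs_self t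
        rw [abs_le]
        rcases hu with ⟨ha, hb⟩ | ⟨ha, hb⟩ <;> constructor <;> linarith
      rw [hψeq u (by linarith)]
    -- substitution
    have hsub := intervalIntegral.integral_comp_mul_left (fun u => |u| ^ α * ψ u) htne
      (a := 0) (b := 1)
    have hexp : ∀ s : ℝ, |t * s| ^ α * ψ (t * s) = |t| ^ α * (|s| ^ α * ψ (t * s)) := by
      intro s
      rw [abs_mul, Real.mul_rpow (abs_nonneg t) (abs_nonneg s)]
      ring
    have hleft : (∫ s in (0:ℝ)..1, (fun u => |u| ^ α * ψ u) (t * s)) = |t| ^ α * F 0 t := by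
      simp only [hexp]
      rw [intervalIntegral.integral_const_mul]
      congr 1
      simp only [hFdef]
      apply intervalIntegral.integral_congr
      intro s _
      simp
    have hmain : |t| ^ α * F 0 t = t⁻¹ * ∫ u in (0:ℝ)..t, |u| ^ α * ψ u := by
      rw [← hleft, hsub]; norm_num
    have hsgn : Real.sign t * |t| ^ (1+α) = t * |t| ^ α := by
      rw [Real.rpow_add htpos, Real.rpow_one, ← mul_assoc, habs]
    rw [hstep1, hsgn]
    have ht' : |t| ^ α ≠ 0 := ne_of_gt (Real.rpow_pos_of_pos htpos α)
    field_simp at hmain ⊢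
    linarith [hmain]
  · have h0 : F 0 0 = (∫ s in (0:ℝ)..1, |s| ^ α) * ψ 0 := by
      simp only [hFdef]
      rw [← intervalIntegral.integral_mul_const]
      apply intervalIntegral.integral_congr
      intro s _
      simp
    have h1 : (∫ s in (0:ℝ)..1, |s| ^ α) = 1 / (α + 1) := by
      have : (∫ s in (0:ℝ)..1, |s| ^ α) = ∫ s in (0:ℝ)..1, s ^ α := by
        apply intervalIntegral.integral_congr
        intro s hs
        rw [Set.uIcc_of_le zero_le_one] at hs
        show |s| ^ α = s ^ α
        rw [abs_of_nonneg hs.1]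
      rw [this, integral_rpow (Or.inl (by linarith))]
      rw [Real.one_rpow, Real.zero_rpow (by linarith)]
      ring
    rw [h0, h1, hψeq 0 (by simp; linarith)]
    rw [div_mul_eq_mul_div, one_mul, add_comm]
end
end
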